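/- Let M be an infinite subset of ℕ and k, l ∈ ℕ. Then for every finite partition Plm_l([M]^k) = ⋃_{j=1}^p P_j of the set of plegma families of length l in [M]^k, there exist an infinite subset L of M and 1 ≤ j_0 ≤ p such that Plm_l([L]^k) ⊆ P_{j_0}. -/

import Mathlib

/-- `s : Fin k → ℕ` is the increasing enumeration of a `k`-element subset of `M`. -/
def IsEnum (M : Set ℕ) {k : ℕ} (s : Fin k → ℕ) : Prop :=
  StrictMono s ∧ ∀ i, s i ∈ M

/-- `(p j)_{j=1,…,l}` is a plegma family in `[M]^k`. -/
def IsPlegma (M : Set ℕ) {k l : ℕ} (p : Fin l → Fin k → ℕ) : Prop :=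
  (∀ j, IsEnum M (p j)) ∧
  (∀ i : Fin k, StrictMono fun j : Fin l => p j i) ∧
  (∀ (i : Fin k) (hi : (i : ℕ) + 1 < k) (j j' : Fin l), p j i < p j' ⟨(i : ℕ) + 1, hi⟩)

/-- Infinite Ramsey theorem, with infinite sets represented by strictly
increasing enumerations. -/
theorem ramseyAux (p : ℕ) [Nonempty (Fin p)] :
    ∀ (n : ℕ) (c : (Fin n → ℕ) → Fin p) (M : ℕ → ℕ), StrictMono M →
    ∃ (L : ℕ → ℕ) (j₀ : Fin p), StrictMono L ∧ Set.range L ⊆ Set.range M ∧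
      ∀ t : Fin n → ℕ, StrictMono t → (∀ i, t i ∈ Set.range L) → c t = j₀ := by
  intro n
  induction n with
  | zero =>
    intro c M hM
    exact ⟨M, c (fun i => i.elim0), hM, subset_rfl,
      fun t _ _ => congrArg c (funext fun i => i.elim0)⟩
  | succ n IH =>
    intro c M hM
    have H : ∀ f : {f : ℕ → ℕ // StrictMono f}, ∃ gj : (ℕ → ℕ) × Fin p,
        StrictMono gj.1 ∧ Set.range gj.1 ⊆ Set.range (fun m => f.1 (m + 1)) ∧
        ∀ t : Fin n → ℕ, StrictMono t → (∀ i, t i ∈ Set.range gj.1) →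
          c (Fin.cons (f.1 0) t) = gj.2 := by
      rintro ⟨f, hf⟩
      have hf' : StrictMono (fun m => f (m + 1)) := fun a b h => hf (by omega)
      obtain ⟨g, j, hg, hsub, hmono⟩ := IH (fun t => c (Fin.cons (f 0) t)) _ hf'
      exact ⟨(g, j), hg, hsub, hmono⟩
    choose step hstep1 hstep2 hstep3 using H
    set seq : ℕ → {f : ℕ → ℕ // StrictMono f} := fun i =>
      Nat.rec ⟨M, hM⟩ (fun _ prev => ⟨(step prev).1, hstep1 prev⟩) i with hseqdef
    have hseq : ∀ i, (seq (i + 1)).1 = (step (seq i)).1 := fun i => rfl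
    set col : ℕ → Fin p := fun i => (step (seq i)).2 with hcoldef
    -- nesting
    have nested : ∀ i, ∀ x ∈ Set.range (seq (i + 1)).1,
        (seq i).1 0 < x ∧ x ∈ Set.range (seq i).1 := by
      intro i x hx
      rw [hseq] at hx
      obtain ⟨m, hm⟩ := hstep2 (seq i) hx
      constructor
      · rw [← hm]; exact (seq i).2 (Nat.succ_pos m)
      · exact ⟨m + 1, hm⟩
    have chain : ∀ i j, i ≤ j → Set.range (seq j).1 ⊆ Set.range (seq i).1 := by
      intro i j hij
      induction j with
      | zero =>
        have : i = 0 := Nat.le_zero.mp hij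
        subst this; exact subset_rfl
      | succ j IHj =>
        rcases Nat.eq_or_lt_of_le hij with h | h
        · subst h; exact subset_rfl
        · exact fun x hx => IHj (by omega) (nested j x hx).2
    have gtprop : ∀ i j, i < j → ∀ x ∈ Set.range (seq j).1, (seq i).1 0 < x := by
      intro i j hij x hx
      exact (nested i x (chain (i + 1) j hij hx)).1
    -- the diagonal sequence
    set a : ℕ → ℕ := fun i => (seq i).1 0 with hadef
    have ha : StrictMono a := strictMono_nat_of_lt_succ fun i =>
      (nested i _ ⟨0, rfl⟩).1
    -- pigeonhole
    obtain ⟨j₀, hj₀⟩ := Finite.exists_infinite_fiber col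
    have hS : {i | col i = j₀}.Infinite := by
      have := Set.infinite_coe_iff.mp hj₀
      exact this
    set φ : ℕ → ℕ := fun m => Nat.nth (fun i => col i = j₀) m with hφdef
    have hφ : StrictMono φ := Nat.nth_strictMono hS
    have hφmem : ∀ m, col (φ m) = j₀ := fun m => Nat.nth_mem_of_infinite hS m
    refine ⟨fun m => a (φ m), j₀, ha.comp hφ, ?_, ?_⟩
    · rintro x ⟨m, rfl⟩
      exact chain 0 (φ m) (Nat.zero_le _) ⟨0, rfl⟩
    · intro t ht hmem
      obtain ⟨m₀, hm₀⟩ := hmem 0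
      have htail : ∀ i : Fin n, Fin.tail t i ∈ Set.range (seq (φ m₀ + 1)).1 := by
        intro i
        obtain ⟨m, hm⟩ := hmem i.succ
        have hm₀' : a (φ m₀) = t 0 := hm₀
        have hm' : a (φ m) = t i.succ := hm
        have h1 : a (φ m₀) < a (φ m) := by
          rw [hm₀', hm']; exact ht (Fin.succ_pos i)
        have h2 : φ m₀ < φ m := hφ ((ha.comp hφ).lt_iff_lt.mp h1)
        have : Fin.tail t i ∈ Set.range (seq (φ m)).1 := by
          rw [Fin.tail, ← hm']; exact ⟨0, rfl⟩
        exact chain (φ m₀ + 1) (φ m) h2 this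
      have htmono : StrictMono (Fin.tail t) := fun i j h =>
        ht (Fin.succ_lt_succ_iff.mpr h)
      have key := hstep3 (seq (φ m₀)) (Fin.tail t) htmono (fun i => htail i)
      have heq : Fin.cons ((seq (φ m₀)).1 0) (Fin.tail t) = t := by
        rw [show (seq (φ m₀)).1 0 = t 0 from hm₀, Fin.cons_self_tail]
      rw [heq] at key
      rw [key]
      exact hφmem m₀

/-- Unflatten a `(k*l)`-tuple into an `l × k` array, column-major. -/
def mkPlegma (k l : ℕ) (t : Fin (k * l) → ℕ) : Fin l → Fin k → ℕ :=
  fun j i => t ⟨(i : ℕ) * l + (j : ℕ), by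
    have hj := j.2; have hi := i.2
    calc (i : ℕ) * l + (j : ℕ) < (i : ℕ) * l + l := by omega
    _ = ((i : ℕ) + 1) * l := by ring
    _ ≤ k * l := Nat.mul_le_mul_right l hi⟩

theorem mkPlegma_isPlegma (k l : ℕ) (S : Set ℕ) (t : Fin (k * l) → ℕ)
    (ht : StrictMono t) (hmem : ∀ r, t r ∈ S) :
    IsPlegma S (mkPlegma k l t) := by
  refine ⟨fun j => ⟨?_, fun i => hmem _⟩, fun i j j' hjj' => ?_, fun i hi j j' => ?_⟩
  · intro i i' hii'
    apply ht
    show (i : ℕ) * l + (j : ℕ) < (i' : ℕ) * l + (j : ℕ)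
    have hl : 0 < l := j.pos
    have : ((i : ℕ) + 1) * l ≤ (i' : ℕ) * l := Nat.mul_le_mul_right l hii'
    have h2 : (i : ℕ) * l + l ≤ (i' : ℕ) * l := by nlinarith
    omega
  · apply ht
    show (i : ℕ) * l + (j : ℕ) < (i : ℕ) * l + (j' : ℕ)
    omega
  · apply ht
    show (i : ℕ) * l + (j : ℕ) < ((i : ℕ) + 1) * l + (j' : ℕ)
    have hj := j.2
    nlinarith

/-- Flatten a plegma family into a `(k*l)`-tuple, column-major. -/
def flattenP (k l : ℕ) (q : Fin l → Fin k → ℕ) : Fin (k * l) → ℕ :=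
  fun r =>
    have hl : 0 < l := by
      rcases Nat.eq_zero_or_pos l with h | h
      · have h0 : k * l = 0 := by rw [h, Nat.mul_zero]
        exact absurd r.2 (by omega)
      · exact h
    q ⟨(r : ℕ) % l, Nat.mod_lt _ hl⟩ ⟨(r : ℕ) / l, by
      rw [Nat.div_lt_iff_lt_mul hl]; exact r.2⟩

theorem flattenP_strictMono {k l : ℕ} {S : Set ℕ} {q : Fin l → Fin k → ℕ}
    (hq : IsPlegma S q) : StrictMono (flattenP k l q) := by
  obtain ⟨henum, hcol, hstep⟩ := hq
  intro r r' hrr'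
  unfold flattenP
  have hl : 0 < l := by
    rcases Nat.eq_zero_or_pos l with h | h
    · have h0 : k * l = 0 := by rw [h, Nat.mul_zero]
      exact absurd r.2 (by omega)
    · exact h
  have hrlt : (r : ℕ) < (r' : ℕ) := hrr'
  show q ⟨(r : ℕ) % l, by exact Nat.mod_lt _ hl⟩ ⟨(r : ℕ) / l, by
      rw [Nat.div_lt_iff_lt_mul hl]; exact r.2⟩
    < q ⟨(r' : ℕ) % l, by exact Nat.mod_lt _ hl⟩ ⟨(r' : ℕ) / l, by
      rw [Nat.div_lt_iff_lt_mul hl]; exact r'.2⟩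
  have e_r : l * ((r : ℕ) / l) + (r : ℕ) % l = (r : ℕ) := Nat.div_add_mod _ _
  have e_r' : l * ((r' : ℕ) / l) + (r' : ℕ) % l = (r' : ℕ) := Nat.div_add_mod _ _
  have jlt : (r : ℕ) % l < l := Nat.mod_lt _ hl
  have jlt' : (r' : ℕ) % l < l := Nat.mod_lt _ hl
  have hik : (r : ℕ) / l < k := (Nat.div_lt_iff_lt_mul hl).mpr r.2
  have hik' : (r' : ℕ) / l < k := (Nat.div_lt_iff_lt_mul hl).mpr r'.2
  rcases Nat.lt_trichotomy ((r : ℕ) / l) ((r' : ℕ) / l) with hii' | hii' | hii'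
  · -- strictly smaller column
    have h1 : (r : ℕ) / l + 1 < k ∨ (r : ℕ) / l + 1 = (r' : ℕ) / l + 1 := by omega
    have h1' : (r : ℕ) / l + 1 < k := by omega
    calc q ⟨(r : ℕ) % l, jlt⟩ ⟨(r : ℕ) / l, hik⟩
        < q ⟨(r' : ℕ) % l, jlt'⟩ ⟨(r : ℕ) / l + 1, h1'⟩ :=
          hstep ⟨(r : ℕ) / l, hik⟩ h1' _ _
      _ ≤ q ⟨(r' : ℕ) % l, jlt'⟩ ⟨(r' : ℕ) / l, hik'⟩ := by
          apply (henum _).1.monotone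
          show (r : ℕ) / l + 1 ≤ (r' : ℕ) / l
          omega
  · -- same column, so smaller row
    have hjj' : (r : ℕ) % l < (r' : ℕ) % l := by rw [hii'] at e_r; omega
    have h := hcol ⟨(r : ℕ) / l, hik⟩
      (show (⟨(r : ℕ) % l, jlt⟩ : Fin l) < ⟨(r' : ℕ) % l, jlt'⟩ from hjj')
    have hfin : (⟨(r' : ℕ) / l, hik'⟩ : Fin k) = ⟨(r : ℕ) / l, hik⟩ :=
      Fin.ext hii'.symm
    calc q ⟨(r : ℕ) % l, _⟩ ⟨(r : ℕ) / l, _⟩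
        < q ⟨(r' : ℕ) % l, jlt'⟩ ⟨(r : ℕ) / l, hik⟩ := h
      _ = q ⟨(r' : ℕ) % l, jlt'⟩ ⟨(r' : ℕ) / l, hik'⟩ := by rw [hfin]
  · -- impossible
    exfalso
    have h3 : l * ((r' : ℕ) / l) + l ≤ l * ((r : ℕ) / l) := by
      have := Nat.mul_le_mul_left l (show (r' : ℕ) / l + 1 ≤ (r : ℕ) / l by omega)
      rwa [Nat.mul_succ] at this
    omega

theorem mkPlegma_flattenP {k l : ℕ} (q : Fin l → Fin k → ℕ) :
    mkPlegma k l (flattenP k l q) = q := by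
  funext j i
  unfold mkPlegma flattenP
  have hl : 0 < l := j.pos
  have h1 : ((i : ℕ) * l + (j : ℕ)) % l = (j : ℕ) := by
    rw [Nat.add_comm, Nat.add_mul_mod_self_right, Nat.mod_eq_of_lt j.2]
  have h2 : ((i : ℕ) * l + (j : ℕ)) / l = (i : ℕ) := by
    rw [Nat.add_comm, Nat.add_mul_div_right _ _ hl, Nat.div_eq_of_lt j.2, Nat.zero_add]
  simp only [h1, h2, Fin.eta]

/-- Ramsey theorem for plegma families. For every finite partition
(covering) of the plegma families of length `l` in `[M]^k` into `p` pieces, there is an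
infinite `L ⊆ M` such that all plegma families of length `l` in `[L]^k` lie in one piece.
Infinite subsets of `ℕ` are represented by their strictly increasing enumerations. -/
theorem statement1 (k l p : ℕ) (M : ℕ → ℕ) (hM : StrictMono M)
    (P : Fin p → Set (Fin l → Fin k → ℕ))
    (hcover : ∀ q : Fin l → Fin k → ℕ, IsPlegma (Set.range M) q → ∃ j, q ∈ P j) :
    ∃ (L : ℕ → ℕ) (j₀ : Fin p), StrictMono L ∧ Set.range L ⊆ Set.range M ∧
      ∀ q : Fin l → Fin k → ℕ, IsPlegma (Set.range L) q → q ∈ P j₀ := by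
  classical
  -- `Fin p` is nonempty since there exists at least one plegma family
  have hMfin : StrictMono (fun r : Fin (k * l) => M (r : ℕ)) := fun a b h => hM h
  have hcanon : IsPlegma (Set.range M) (mkPlegma k l (fun r : Fin (k * l) => M (r : ℕ))) :=
    mkPlegma_isPlegma k l _ _ hMfin (fun r => ⟨(r : ℕ), rfl⟩)
  obtain ⟨jw, -⟩ := hcover _ hcanon
  haveI : Nonempty (Fin p) := ⟨jw⟩
  -- the induced coloring of `(k*l)`-tuples
  set c : (Fin (k * l) → ℕ) → Fin p := fun t =>
    if h : ∃ j, mkPlegma k l t ∈ P j then h.choose else Classical.arbitrary _ with hcdef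
  obtain ⟨L, j₀, hL, hsub, hmono⟩ := ramseyAux p (k * l) c M hM
  refine ⟨L, j₀, hL, hsub, ?_⟩
  intro q hq
  have hqM : IsPlegma (Set.range M) q :=
    ⟨fun j => ⟨(hq.1 j).1, fun i => hsub ((hq.1 j).2 i)⟩, hq.2.1, hq.2.2⟩
  have hex : ∃ j, q ∈ P j := hcover q hqM
  set t : Fin (k * l) → ℕ := flattenP k l q with htdef
  have hmk : mkPlegma k l t = q := mkPlegma_flattenP q
  have hmem : ∀ r, t r ∈ Set.range L := by
    intro r
    show flattenP k l q r ∈ Set.range L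
    unfold flattenP
    exact (hq.1 _).2 _
  have hct : c t = j₀ := hmono t (flattenP_strictMono hq) hmem
  have hex' : ∃ j, mkPlegma k l t ∈ P j := hmk ▸ hex
  have hc : mkPlegma k l t ∈ P (c t) := by
    rw [hcdef]
    simp only
    rw [dif_pos hex']
    exact hex'.choose_spec
  rw [hmk, hct] at hc
  exact hc
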